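/- Let f ∈ S^p with 1 ≤ p < ∞, let φ ∈ Φ be a continuous bounded nonnegative even function with φ(0)=0 and vanishing only on a null set, let τ > 0, n ∈ ℕ, and let v be a bounded nondecreasing function on [0,τ] that is not constant. Then E_n^p(f)_p · I_{n,φ,p}(τ,v) ≤ ∫_0^τ ω_φ^p(f, u/n)_p dv(u), where I_{n,φ,p}(τ,v) = inf_{k≥n} ∫_0^τ φ^p(ku/n) dv(u), E_n(f)_p = (Σ_{|k|≥n}|f̂(k)|^p)^{1/p}, and ω_φ(f,δ)_p = sup_{|h|≤δ} (Σ_{k∈ℤ} φ^p(kh)|f̂(k)|^p)^{1/p}. -/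

import Mathlib

open MeasureTheory

/-- `φ ∈ Φ`: continuous, bounded, nonnegative, even, `φ(0)=0`, vanishing only on a null set. -/
def MemPhi (φ : ℝ → ℝ) : Prop :=
  Continuous φ ∧ (∃ C : ℝ, ∀ t, φ t ≤ C) ∧ (∀ t, 0 ≤ φ t) ∧ (∀ t, φ (-t) = φ t) ∧
    φ 0 = 0 ∧ volume {t : ℝ | φ t = 0} = 0

/-- Generalized modulus of smoothness `ω_φ(f, δ)_p` of a function of `S^p` given through
its sequence of Fourier coefficients `a`. -/
noncomputable def spMod (p : ℝ) (φ : ℝ → ℝ) (a : ℤ → ℂ) (δ : ℝ) : ℝ :=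
  sSup {s : ℝ | ∃ h : ℝ, |h| ≤ δ ∧
    s = (∑' k : ℤ, φ ((k : ℝ) * h) ^ p * ‖a k‖ ^ p) ^ (1 / p)}

section Aux

variable {p : ℝ} {φ : ℝ → ℝ} {a : ℤ → ℂ}

private lemma term_nonneg (hpos : ∀ t, 0 ≤ φ t) (h : ℝ) (k : ℤ) :
    0 ≤ φ ((k : ℝ) * h) ^ p * ‖a k‖ ^ p :=
  mul_nonneg (Real.rpow_nonneg (hpos _) p) (Real.rpow_nonneg (norm_nonneg _) p)

private lemma term_le (hp : 1 ≤ p) {C : ℝ} (hC : ∀ t, φ t ≤ C) (hpos : ∀ t, 0 ≤ φ t)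
    (h : ℝ) (k : ℤ) :
    φ ((k : ℝ) * h) ^ p * ‖a k‖ ^ p ≤ C ^ p * ‖a k‖ ^ p :=
  mul_le_mul_of_nonneg_right (Real.rpow_le_rpow (hpos _) (hC _) (zero_le_one.trans hp))
    (Real.rpow_nonneg (norm_nonneg _) p)

private lemma term_summable (hp : 1 ≤ p) (ha : Summable fun k : ℤ => ‖a k‖ ^ p)
    {C : ℝ} (hC : ∀ t, φ t ≤ C) (hpos : ∀ t, 0 ≤ φ t) (h : ℝ) :
    Summable fun k : ℤ => φ ((k : ℝ) * h) ^ p * ‖a k‖ ^ p :=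
  Summable.of_nonneg_of_le (term_nonneg hpos h) (term_le hp hC hpos h) (ha.mul_left _)

private lemma elem_le (hp : 1 ≤ p) (ha : Summable fun k : ℤ => ‖a k‖ ^ p)
    {C : ℝ} (hC : ∀ t, φ t ≤ C) (hpos : ∀ t, 0 ≤ φ t) (h : ℝ) :
    (∑' k : ℤ, φ ((k : ℝ) * h) ^ p * ‖a k‖ ^ p) ^ (1 / p) ≤
      (C ^ p * ∑' k : ℤ, ‖a k‖ ^ p) ^ (1 / p) := by
  refine Real.rpow_le_rpow (tsum_nonneg (term_nonneg hpos h)) ?_ (by positivity)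
  calc ∑' k : ℤ, φ ((k : ℝ) * h) ^ p * ‖a k‖ ^ p
      ≤ ∑' k : ℤ, C ^ p * ‖a k‖ ^ p :=
        Summable.tsum_le_tsum (term_le hp hC hpos h) (term_summable hp ha hC hpos h) (ha.mul_left _)
    _ = C ^ p * ∑' k : ℤ, ‖a k‖ ^ p := tsum_mul_left

private lemma spSet_bdd (hp : 1 ≤ p) (ha : Summable fun k : ℤ => ‖a k‖ ^ p)
    {C : ℝ} (hC : ∀ t, φ t ≤ C) (hpos : ∀ t, 0 ≤ φ t) (δ : ℝ) :
    BddAbove {s : ℝ | ∃ h : ℝ, |h| ≤ δ ∧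
      s = (∑' k : ℤ, φ ((k : ℝ) * h) ^ p * ‖a k‖ ^ p) ^ (1 / p)} := by
  refine ⟨(C ^ p * ∑' k : ℤ, ‖a k‖ ^ p) ^ (1 / p), ?_⟩
  rintro s ⟨h, -, rfl⟩
  exact elem_le hp ha hC hpos h

private lemma spSet_mem {δ : ℝ} (hδ : 0 ≤ δ) :
    (∑' k : ℤ, φ ((k : ℝ) * δ) ^ p * ‖a k‖ ^ p) ^ (1 / p) ∈
      {s : ℝ | ∃ h : ℝ, |h| ≤ δ ∧
        s = (∑' k : ℤ, φ ((k : ℝ) * h) ^ p * ‖a k‖ ^ p) ^ (1 / p)} :=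
  ⟨δ, by rw [abs_of_nonneg hδ], rfl⟩

private lemma le_spMod (hp : 1 ≤ p) (ha : Summable fun k : ℤ => ‖a k‖ ^ p)
    {C : ℝ} (hC : ∀ t, φ t ≤ C) (hpos : ∀ t, 0 ≤ φ t) {δ : ℝ} (hδ : 0 ≤ δ) :
    (∑' k : ℤ, φ ((k : ℝ) * δ) ^ p * ‖a k‖ ^ p) ^ (1 / p) ≤ spMod p φ a δ :=
  le_csSup (spSet_bdd hp ha hC hpos δ) (spSet_mem hδ)

private lemma spSet_empty {δ : ℝ} (hδ : δ < 0) :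
    {s : ℝ | ∃ h : ℝ, |h| ≤ δ ∧
      s = (∑' k : ℤ, φ ((k : ℝ) * h) ^ p * ‖a k‖ ^ p) ^ (1 / p)} = (∅ : Set ℝ) := by
  ext s
  simp only [Set.mem_setOf_eq, Set.mem_empty_iff_false, iff_false]
  rintro ⟨h, hh, -⟩
  exact absurd (hh.trans_lt hδ) (not_lt.2 (abs_nonneg h))

private lemma spMod_nonneg (hp : 1 ≤ p) (ha : Summable fun k : ℤ => ‖a k‖ ^ p)
    {C : ℝ} (hC : ∀ t, φ t ≤ C) (hpos : ∀ t, 0 ≤ φ t) (δ : ℝ) :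
    0 ≤ spMod p φ a δ := by
  rcases lt_or_ge δ 0 with hδ | hδ
  · rw [spMod, spSet_empty hδ, Real.sSup_empty]
  · exact le_trans (Real.rpow_nonneg (tsum_nonneg (term_nonneg hpos δ)) _)
      (le_spMod hp ha hC hpos hδ)

private lemma spMod_le (hp : 1 ≤ p) (ha : Summable fun k : ℤ => ‖a k‖ ^ p)
    {C : ℝ} (hC0 : 0 ≤ C) (hC : ∀ t, φ t ≤ C) (hpos : ∀ t, 0 ≤ φ t) (δ : ℝ) :
    spMod p φ a δ ≤ (C ^ p * ∑' k : ℤ, ‖a k‖ ^ p) ^ (1 / p) := by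
  rcases lt_or_ge δ 0 with hδ | hδ
  · rw [spMod, spSet_empty hδ, Real.sSup_empty]
    exact Real.rpow_nonneg (mul_nonneg (Real.rpow_nonneg hC0 p)
      (tsum_nonneg fun k => Real.rpow_nonneg (norm_nonneg _) p)) _
  · refine csSup_le ⟨_, spSet_mem hδ⟩ ?_
    rintro s ⟨h, -, rfl⟩
    exact elem_le hp ha hC hpos h

private lemma spMod_mono (hp : 1 ≤ p) (ha : Summable fun k : ℤ => ‖a k‖ ^ p)
    {C : ℝ} (hC : ∀ t, φ t ≤ C) (hpos : ∀ t, 0 ≤ φ t) :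
    Monotone (spMod p φ a) := by
  intro δ₁ δ₂ h12
  rcases lt_or_ge δ₁ 0 with hδ | hδ
  · rw [spMod, spSet_empty hδ, Real.sSup_empty]
    exact spMod_nonneg hp ha hC hpos δ₂
  · refine csSup_le_csSup (spSet_bdd hp ha hC hpos δ₂) ⟨_, spSet_mem hδ⟩ ?_
    rintro s ⟨h, hh, rfl⟩
    exact ⟨h, hh.trans h12, rfl⟩

end Aux

/-- `E_n^p(f)_p · I_{n,φ,p}(τ,v) ≤ ∫_0^τ ω_φ^p(f, u/n)_p dv(u)`. -/
theorem sp_En_mul_I_le_integral (p : ℝ) (hp : 1 ≤ p) (a : ℤ → ℂ)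
    (ha : Summable fun k : ℤ => ‖a k‖ ^ p)
    (φ : ℝ → ℝ) (hφ : MemPhi φ) (τ : ℝ) (hτ : 0 < τ) (n : ℕ) (hn : 1 ≤ n)
    (v : StieltjesFunction ℝ) (hv : v 0 < v τ) :
    (∑' k : {k : ℤ // (n : ℤ) ≤ |k|}, ‖a k.1‖ ^ p) *
        (⨅ k : {k : ℕ // n ≤ k}, ∫ u in Set.Ioc (0:ℝ) τ,
          φ ((k.1 : ℝ) * u / n) ^ p ∂v.measure) ≤
      ∫ u in Set.Ioc (0:ℝ) τ, (spMod p φ a (u / n)) ^ p ∂v.measure := by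
  obtain ⟨hcont, ⟨C, hC⟩, hpos, heven, hzero, -⟩ := hφ
  have hp0 : (0:ℝ) < p := lt_of_lt_of_le zero_lt_one hp
  have hC0 : (0:ℝ) ≤ C := (hpos 0).trans (hC 0)
  have hnR : (0:ℝ) < n := by exact_mod_cast Nat.lt_of_lt_of_le Nat.zero_lt_one hn
  -- the family of integrands
  set T : {k : ℤ // (n : ℤ) ≤ |k|} → ℝ → ℝ :=
    fun k u => φ ((k.1 : ℝ) * u / n) ^ p * ‖a k.1‖ ^ p with hT
  have hfin : v.measure (Set.Ioc (0:ℝ) τ) < ⊤ := by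
    rw [v.measure_Ioc]
    exact ENNReal.ofReal_lt_top
  set M : ℝ := (v.measure (Set.Ioc (0:ℝ) τ)).toReal with hM
  -- integrability of each T k
  have hTcont : ∀ k : {k : ℤ // (n : ℤ) ≤ |k|}, Continuous (T k) := by
    intro k
    refine Continuous.mul ?_ continuous_const
    refine Continuous.rpow_const (hcont.comp (by continuity)) (fun x => Or.inr hp0.le)
  have hTint : ∀ k : {k : ℤ // (n : ℤ) ≤ |k|},
      IntegrableOn (T k) (Set.Ioc (0:ℝ) τ) v.measure :=
    fun k => (hTcont k).integrableOn_Ioc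
  have hTnn : ∀ (k : {k : ℤ // (n : ℤ) ≤ |k|}) (u : ℝ), 0 ≤ T k u := fun k u =>
    mul_nonneg (Real.rpow_nonneg (hpos _) p) (Real.rpow_nonneg (norm_nonneg _) p)
  -- bound on the integrals of T k
  have hTbound : ∀ k : {k : ℤ // (n : ℤ) ≤ |k|},
      ∫ u in Set.Ioc (0:ℝ) τ, T k u ∂v.measure ≤ (C ^ p * M) * ‖a k.1‖ ^ p := by
    intro k
    have hconst : IntegrableOn (fun _ : ℝ => C ^ p * ‖a k.1‖ ^ p)
        (Set.Ioc (0:ℝ) τ) v.measure := integrableOn_const hfin.ne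
    calc ∫ u in Set.Ioc (0:ℝ) τ, T k u ∂v.measure
        ≤ ∫ _ in Set.Ioc (0:ℝ) τ, C ^ p * ‖a k.1‖ ^ p ∂v.measure := by
          refine setIntegral_mono_on (hTint k) hconst measurableSet_Ioc (fun u _ => ?_)
          exact mul_le_mul_of_nonneg_right
            (Real.rpow_le_rpow (hpos _) (hC _) hp0.le) (Real.rpow_nonneg (norm_nonneg _) p)
      _ = M * (C ^ p * ‖a k.1‖ ^ p) := by rw [setIntegral_const, smul_eq_mul, measureReal_def]
      _ = (C ^ p * M) * ‖a k.1‖ ^ p := by ring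
  have haSub : Summable fun k : {k : ℤ // (n : ℤ) ≤ |k|} => ‖a k.1‖ ^ p := ha.subtype _
  -- summability of the integrals
  have hTsumInt : Summable fun k : {k : ℤ // (n : ℤ) ≤ |k|} =>
      ∫ u in Set.Ioc (0:ℝ) τ, T k u ∂v.measure := by
    refine Summable.of_nonneg_of_le
      (fun k => integral_nonneg (fun u => hTnn k u)) hTbound ?_
    exact haSub.mul_left _
  -- interchange of sum and integral
  have hswap : ∑' k : {k : ℤ // (n : ℤ) ≤ |k|}, ∫ u in Set.Ioc (0:ℝ) τ, T k u ∂v.measure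
      = ∫ u in Set.Ioc (0:ℝ) τ, ∑' k : {k : ℤ // (n : ℤ) ≤ |k|}, T k u ∂v.measure := by
    refine integral_tsum_of_summable_integral_norm hTint ?_
    have : ∀ k : {k : ℤ // (n : ℤ) ≤ |k|},
        (∫ u in Set.Ioc (0:ℝ) τ, ‖T k u‖ ∂v.measure)
          = ∫ u in Set.Ioc (0:ℝ) τ, T k u ∂v.measure := by
      intro k
      refine integral_congr_ae (Filter.Eventually.of_forall fun u => ?_)
      exact Real.norm_of_nonneg (hTnn k u)
    simpa only [this] using hTsumInt
  -- the infimum is below each integral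
  have hIbdd : BddBelow (Set.range fun k : {k : ℕ // n ≤ k} =>
      ∫ u in Set.Ioc (0:ℝ) τ, φ ((k.1 : ℝ) * u / n) ^ p ∂v.measure) := by
    refine ⟨0, ?_⟩
    rintro x ⟨j, rfl⟩
    exact integral_nonneg fun u => Real.rpow_nonneg (hpos _) p
  set I : ℝ := ⨅ k : {k : ℕ // n ≤ k}, ∫ u in Set.Ioc (0:ℝ) τ,
      φ ((k.1 : ℝ) * u / n) ^ p ∂v.measure with hI
  have hstep : ∀ k : {k : ℤ // (n : ℤ) ≤ |k|},
      ‖a k.1‖ ^ p * I ≤ ∫ u in Set.Ioc (0:ℝ) τ, T k u ∂v.measure := by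
    intro k
    set m : ℕ := k.1.natAbs with hm
    have hmn : n ≤ m := by
      have := k.2
      rw [Int.abs_eq_natAbs] at this
      exact_mod_cast this
    have heq : (fun u : ℝ => φ ((m : ℝ) * u / n) ^ p)
        = fun u : ℝ => φ ((k.1 : ℝ) * u / n) ^ p := by
      funext u
      rcases le_or_gt 0 k.1 with hk | hk
      · have : ((m : ℤ) : ℝ) = (k.1 : ℝ) := by
          rw [hm, Int.natAbs_of_nonneg hk]
        rw [show ((m : ℕ) : ℝ) = ((m : ℤ) : ℝ) by push_cast; ring, this]
      · have : ((m : ℤ) : ℝ) = -(k.1 : ℝ) := by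
          rw [hm, Int.ofNat_natAbs_of_nonpos hk.le]
          push_cast; ring
        rw [show ((m : ℕ) : ℝ) = ((m : ℤ) : ℝ) by push_cast; ring, this]
        rw [show -(k.1 : ℝ) * u / n = -((k.1 : ℝ) * u / n) by ring, heven]
    have hIle : I ≤ ∫ u in Set.Ioc (0:ℝ) τ, φ ((k.1 : ℝ) * u / n) ^ p ∂v.measure := by
      have := ciInf_le hIbdd (⟨m, hmn⟩ : {k : ℕ // n ≤ k})
      rwa [show (((⟨m, hmn⟩ : {k : ℕ // n ≤ k}).1 : ℝ)) = (m : ℝ) from rfl, heq] at this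
    calc ‖a k.1‖ ^ p * I
        ≤ ‖a k.1‖ ^ p * ∫ u in Set.Ioc (0:ℝ) τ, φ ((k.1 : ℝ) * u / n) ^ p ∂v.measure :=
          mul_le_mul_of_nonneg_left hIle (Real.rpow_nonneg (norm_nonneg _) p)
      _ = ∫ u in Set.Ioc (0:ℝ) τ, T k u ∂v.measure := by
          rw [hT, integral_mul_const, mul_comm]
  -- pointwise bound by spMod^p on (0, τ]
  have hpt : ∀ u ∈ Set.Ioc (0:ℝ) τ,
      (∑' k : {k : ℤ // (n : ℤ) ≤ |k|}, T k u) ≤ spMod p φ a (u / n) ^ p := by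
    intro u hu
    have hδ : 0 ≤ u / n := div_nonneg hu.1.le hnR.le
    set W : ℝ := ∑' k : ℤ, φ ((k : ℝ) * (u / n)) ^ p * ‖a k‖ ^ p with hW
    have hWnn : 0 ≤ W := tsum_nonneg (term_nonneg hpos _)
    have h1 : (∑' k : {k : ℤ // (n : ℤ) ≤ |k|}, T k u) ≤ W := by
      have hTu : ∀ k : {k : ℤ // (n : ℤ) ≤ |k|},
          T k u = φ ((k.1 : ℝ) * (u / n)) ^ p * ‖a k.1‖ ^ p := by
        intro k; rw [hT]; ring_nf
      calc (∑' k : {k : ℤ // (n : ℤ) ≤ |k|}, T k u)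
          = ∑' k : {k : ℤ // (n : ℤ) ≤ |k|}, φ ((k.1 : ℝ) * (u / n)) ^ p * ‖a k.1‖ ^ p :=
            tsum_congr hTu
        _ ≤ W :=
            Summable.tsum_subtype_le (fun k : ℤ => φ ((k : ℝ) * (u / n)) ^ p * ‖a k‖ ^ p)
              {k : ℤ | (n : ℤ) ≤ |k|} (term_nonneg hpos _) (term_summable hp ha hC hpos _)
    have h2 : W ^ (1 / p) ≤ spMod p φ a (u / n) := le_spMod hp ha hC hpos hδ
    have h3 : (W ^ (1 / p)) ^ p ≤ spMod p φ a (u / n) ^ p :=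
      Real.rpow_le_rpow (Real.rpow_nonneg hWnn _) h2 hp0.le
    have h4 : (W ^ (1 / p)) ^ p = W := by
      rw [← Real.rpow_mul hWnn, one_div_mul_cancel hp0.ne', Real.rpow_one]
    exact h1.trans (h4 ▸ h3)
  -- integrability of spMod^p
  have hspInt : IntegrableOn (fun u => spMod p φ a (u / n) ^ p) (Set.Ioc (0:ℝ) τ)
      v.measure := by
    have hmono : Monotone fun u : ℝ => spMod p φ a (u / n) ^ p := by
      intro u₁ u₂ h12
      refine Real.rpow_le_rpow (spMod_nonneg hp ha hC hpos _) ?_ hp0.le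
      exact spMod_mono hp ha hC hpos (by gcongr)
    have hb : ∀ u : ℝ, ‖spMod p φ a (u / n) ^ p‖ ≤
        ((C ^ p * ∑' k : ℤ, ‖a k‖ ^ p) ^ (1 / p)) ^ p := by
      intro u
      rw [Real.norm_of_nonneg (Real.rpow_nonneg (spMod_nonneg hp ha hC hpos _) p)]
      exact Real.rpow_le_rpow (spMod_nonneg hp ha hC hpos _)
        (spMod_le hp ha hC0 hC hpos _) hp0.le
    exact Integrable.mono' (integrableOn_const hfin.ne)
      (hmono.measurable.aestronglyMeasurable) (Filter.Eventually.of_forall hb)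
  -- final chain
  calc (∑' k : {k : ℤ // (n : ℤ) ≤ |k|}, ‖a k.1‖ ^ p) * I
      = ∑' k : {k : ℤ // (n : ℤ) ≤ |k|}, ‖a k.1‖ ^ p * I := tsum_mul_right.symm
    _ ≤ ∑' k : {k : ℤ // (n : ℤ) ≤ |k|}, ∫ u in Set.Ioc (0:ℝ) τ, T k u ∂v.measure :=
        Summable.tsum_le_tsum hstep (haSub.mul_right I) hTsumInt
    _ = ∫ u in Set.Ioc (0:ℝ) τ, ∑' k : {k : ℤ // (n : ℤ) ≤ |k|}, T k u ∂v.measure := hswap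
    _ ≤ ∫ u in Set.Ioc (0:ℝ) τ, spMod p φ a (u / n) ^ p ∂v.measure := by
        refine integral_mono_of_nonneg
          (Filter.Eventually.of_forall fun u => tsum_nonneg fun k => hTnn k u) hspInt ?_
        exact (ae_restrict_iff' measurableSet_Ioc).2 (Filter.Eventually.of_forall hpt)
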